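/- For every n ≥ 1, the Narayana h-polynomials satisfy the recurrence H_n(α,t) = (α+t)·H_{n-1}(α,t) + αt·Σ_{i=1}^{n-1} H_{i-1}(α,t)·H_{n-i-1}(α,t), where H_n(α,t) = Σ_{i=0}^{n} N(n,i)·α^{n-i}·t^i and H_0 = 1. (This is the inductive formula for the H-polynomial of the associahedron As^n obtained by shaving facets of the cylinder As^{n-1} × I.) -/

import Mathlib

open Finset MvPolynomial

/-- The h-polynomial of the associahedron `As^n`:
`H_n(α,t) = Σ_{i=0}^{n} N(n,i)·α^{n-i}·t^i` where `N(n,i)` is the Narayana number. -/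
noncomputable def narayanaH (n : ℕ) : MvPolynomial (Fin 2) ℚ :=
  ∑ i ∈ Finset.range (n + 1),
    MvPolynomial.C ((1 / (n + 1 : ℚ)) * ((n + 1).choose i) * ((n + 1).choose (i + 1))) *
      MvPolynomial.X 0 ^ (n - i) * MvPolynomial.X 1 ^ i


/-- Upper-index Vandermonde: `∑_{k<N} C(k,p)·C(N-1-k,q) = C(N,p+q+1)`. -/
lemma vand_upper (p : ℕ) : ∀ (q N : ℕ),
    ∑ k ∈ range N, k.choose p * (N - 1 - k).choose q = N.choose (p + q + 1) := by
  intro q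
  induction q with
  | zero =>
    intro N
    simp only [Nat.choose_zero_right, mul_one]
    cases N with
    | zero => simp
    | succ n =>
      have h1 : ∑ k ∈ range (n+1), k.choose p = ∑ k ∈ Icc p n, k.choose p := by
        rw [range_eq_Ico, ← Finset.Ico_add_one_right_eq_Icc]
        refine (sum_subset ?_ ?_).symm
        · intro x hx; simp only [mem_Ico, mem_Icc] at *; omega
        · intro x hx hx'; simp only [mem_Ico, mem_Icc] at *
          exact Nat.choose_eq_zero_of_lt (by omega)
      rw [h1, Nat.sum_Icc_choose]
  | succ q ihq =>
    intro N
    induction N with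
    | zero => simp
    | succ n ihN =>
      rw [sum_range_succ, show n + 1 - 1 - n = 0 by omega,
        show Nat.choose 0 (q+1) = 0 from Nat.choose_eq_zero_of_lt (by omega), mul_zero, add_zero]
      have h2 : ∀ k ∈ range n,
          k.choose p * (n + 1 - 1 - k).choose (q+1)
            = k.choose p * (n - 1 - k).choose q + k.choose p * (n - 1 - k).choose (q+1) := by
        intro k hk
        simp only [mem_range] at hk
        rw [show n + 1 - 1 - k = (n - 1 - k) + 1 by omega, Nat.choose_succ_succ, mul_add]
      rw [sum_congr rfl h2, sum_add_distrib, ihq n, ihN,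
        show p + (q+1) + 1 = (p + q + 1) + 1 by omega]
      rw [show (n+1).choose (p+q+1+1) = n.choose (p+q+1) + n.choose (p+q+1+1) from
        Nat.choose_succ_succ _ _]

lemma cat_cast (m : ℕ) : (catalan m : ℚ) = (2*m).factorial / (m.factorial * (m+1).factorial) := by
  have h := succ_mul_catalan_eq_centralBinom m
  have h' : ((m+1 : ℕ) : ℚ) * (catalan m : ℚ) = ((2*m).choose m : ℚ) := by
    exact_mod_cast congrArg (Nat.cast : ℕ → ℚ) h
  have hc : ((2*m).choose m : ℚ) = (2*m).factorial / (m.factorial * (2*m - m).factorial) :=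
    Nat.cast_choose ℚ (by omega)
  rw [show 2*m - m = m by omega] at hc
  have hm : (m.factorial : ℚ) ≠ 0 := by exact_mod_cast m.factorial_ne_zero
  have hm1 : ((m+1).factorial : ℚ) ≠ 0 := by exact_mod_cast (m+1).factorial_ne_zero
  have hmp : ((m:ℚ) + 1) ≠ 0 := by positivity
  rw [hc] at h'
  rw [Nat.factorial_succ]
  push_cast at h' ⊢
  field_simp at h' ⊢
  linarith [h']

/-- `∑_m C(i,m)·C(n+1-i,m+1) = C(n+1,n-i)` for `i ≤ n`. -/
lemma vandC {n i : ℕ} (hi : i ≤ n) :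
    ∑ m ∈ range (n+1), i.choose m * (n+1-i).choose (m+1) = (n+1).choose (n-i) := by
  have step1 : ∑ m ∈ range (n+1), i.choose m * (n+1-i).choose (m+1)
      = ∑ m ∈ range (n-i+1), i.choose m * (n+1-i).choose (m+1) := by
    refine (Finset.sum_subset ?_ ?_).symm
    · intro x hx; simp only [mem_range] at *; omega
    · intro x hx hx'; simp only [mem_range] at *
      rw [Nat.choose_eq_zero_of_lt (show n+1-i < x+1 by omega), mul_zero]
  have step2 : ∑ m ∈ range (n-i+1), i.choose m * (n+1-i).choose (m+1)
      = ∑ m ∈ range (n-i+1), i.choose m * (n+1-i).choose (n-i-m) := by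
    refine Finset.sum_congr rfl fun a ha => ?_
    simp only [mem_range] at ha
    congr 1
    rw [← Nat.choose_symm (show n-i-a ≤ n+1-i by omega)]
    congr 1
    omega
  rw [step1, step2,
    ← Finset.Nat.sum_antidiagonal_eq_sum_range_succ (fun a b => i.choose a * (n+1-i).choose b),
    ← Nat.add_choose_eq]
  congr 1
  omega

def gQ (n : ℕ) (x y : ℚ) : ℚ :=
  ∑ m ∈ range (n+1), (n.choose (2*m) : ℚ) * (catalan m : ℚ) * (x+y)^(n-2*m) * (x*y)^m

def fQ (n : ℕ) (x y : ℚ) : ℚ :=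
  ∑ i ∈ range (n+1),
    (1 / (n + 1 : ℚ)) * ((n + 1).choose i : ℚ) * ((n + 1).choose (i + 1) : ℚ) * x^(n-i) * y^i

lemma lemE (n m : ℕ) (hm : m ≤ n) (x y : ℚ) :
    (n.choose (2*m) : ℚ) * (catalan m : ℚ) * (x+y)^(n-2*m) * (x*y)^m
      = ∑ i ∈ range (n+1),
          (n.factorial : ℚ) / (i.factorial * (n+1-i).factorial)
            * (i.choose m : ℚ) * ((n+1-i).choose (m+1) : ℚ) * x^(n-i) * y^i := by
  by_cases h2 : 2*m ≤ n
  · -- restrict RHS to Icc m (n-m)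
    have hsub : ∑ i ∈ range (n+1),
          (n.factorial : ℚ) / (i.factorial * (n+1-i).factorial)
            * (i.choose m : ℚ) * ((n+1-i).choose (m+1) : ℚ) * x^(n-i) * y^i
        = ∑ i ∈ Icc m (n-m),
          (n.factorial : ℚ) / (i.factorial * (n+1-i).factorial)
            * (i.choose m : ℚ) * ((n+1-i).choose (m+1) : ℚ) * x^(n-i) * y^i := by
      refine (Finset.sum_subset ?_ ?_).symm
      · intro x hx; simp only [mem_Icc, mem_range] at *; omega
      · intro j hj hj'
        simp only [mem_Icc, mem_range] at *
        rcases lt_or_ge j m with h | h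
        · rw [Nat.choose_eq_zero_of_lt h]; push_cast; ring
        · rw [Nat.choose_eq_zero_of_lt (show n+1-j < m+1 by omega)]; push_cast; ring
    rw [hsub, add_pow, Finset.mul_sum, Finset.sum_mul]
    refine Finset.sum_nbij' (fun j => n - m - j) (fun i => n - m - i) ?_ ?_ ?_ ?_ ?_
    · intro j hj; simp only [mem_range, mem_Icc] at *; omega
    · intro i hi; simp only [mem_range, mem_Icc] at *; omega
    · intro j hj; simp only [mem_range] at hj; show n - m - (n - m - j) = j; omega
    · intro i hi; simp only [mem_Icc] at hi; show n - m - (n - m - i) = i; omega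
    · intro j hj
      simp only [mem_range] at hj
      have hj' : j ≤ n - 2*m := by omega
      have e1 : n - (n - m - j) = m + j := by omega
      have e2 : n + 1 - (n - m - j) = m + j + 1 := by omega
      have e3 : n - m - j - m = n - 2*m - j := by omega
      rw [e1, e2]
      have hfac : ∀ k : ℕ, ((k.factorial : ℚ)) ≠ 0 := fun k => by
        exact_mod_cast k.factorial_ne_zero
      have coeff_eq : (n.choose (2*m) : ℚ) * (catalan m : ℚ) * ((n-2*m).choose j : ℚ)
          = (n.factorial : ℚ) / ((n-m-j).factorial * (m+j+1).factorial)
              * ((n-m-j).choose m : ℚ) * ((m+j+1).choose (m+1) : ℚ) := by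
        have c1 : (n.choose (2*m) : ℚ) = n.factorial / ((2*m).factorial * (n-2*m).factorial) :=
          Nat.cast_choose ℚ h2
        have c2 : ((n-2*m).choose j : ℚ)
            = (n-2*m).factorial / (j.factorial * (n-2*m-j).factorial) := Nat.cast_choose ℚ hj'
        have c3 : ((n-m-j).choose m : ℚ)
            = (n-m-j).factorial / (m.factorial * (n-2*m-j).factorial) := by
          rw [Nat.cast_choose ℚ (show m ≤ n-m-j by omega), e3]
        have c4 : ((m+j+1).choose (m+1) : ℚ)
            = (m+j+1).factorial / ((m+1).factorial * j.factorial) := by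
          rw [Nat.cast_choose ℚ (show m+1 ≤ m+j+1 by omega),
            show m+j+1-(m+1) = j by omega]
        have expand : ((m+1).factorial : ℚ) = (m+1) * m.factorial := by
          exact_mod_cast Nat.factorial_succ m
        rw [c1, c2, c3, c4, cat_cast, expand]
        field_simp
      have hpow : x ^ j * y ^ (n - 2*m - j) * (x*y)^m = x^(m+j) * y^(n-m-j) := by
        rw [show n-m-j = (n-2*m-j)+m by omega, show m+j = j+m by omega,
          pow_add, pow_add, mul_pow]
        ring
      calc (n.choose (2*m) : ℚ) * (catalan m : ℚ)
            * (x ^ j * y ^ (n - 2*m - j) * ((n-2*m).choose j : ℚ)) * (x*y)^m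
          = ((n.choose (2*m) : ℚ) * (catalan m : ℚ) * ((n-2*m).choose j : ℚ))
              * (x ^ j * y ^ (n - 2*m - j) * (x*y)^m) := by ring
        _ = ((n.factorial : ℚ) / ((n-m-j).factorial * (m+j+1).factorial)
              * ((n-m-j).choose m : ℚ) * ((m+j+1).choose (m+1) : ℚ))
              * (x^(m+j) * y^(n-m-j)) := by rw [coeff_eq, hpow]
        _ = (n.factorial : ℚ) / ((n-m-j).factorial * (m+j+1).factorial)
              * ((n-m-j).choose m : ℚ) * ((m+j+1).choose (m+1) : ℚ)
              * x^(m+j) * y^(n-m-j) := by ring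
  · push_neg at h2
    rw [Nat.choose_eq_zero_of_lt h2]
    push_cast
    rw [zero_mul, zero_mul, zero_mul]
    symm
    refine Finset.sum_eq_zero fun i hi => ?_
    simp only [mem_range] at hi
    rcases lt_or_ge i m with h | h
    · rw [Nat.choose_eq_zero_of_lt h]; push_cast; ring
    · rw [Nat.choose_eq_zero_of_lt (show n+1-i < m+1 by omega)]; push_cast; ring

lemma lemD {n i : ℕ} (hi : i ≤ n) :
    (n.factorial : ℚ) / (i.factorial * (n+1-i).factorial) * ((n+1).choose (n-i) : ℚ)
      = (1 / (n + 1 : ℚ)) * ((n + 1).choose i : ℚ) * ((n + 1).choose (i + 1) : ℚ) := by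
  have hfac : ∀ k : ℕ, ((k.factorial : ℚ)) ≠ 0 := fun k => by
    exact_mod_cast k.factorial_ne_zero
  have c1 : ((n+1).choose (n-i) : ℚ)
      = (n+1).factorial / ((n-i).factorial * (i+1).factorial) := by
    rw [Nat.cast_choose ℚ (show n-i ≤ n+1 by omega), show n+1-(n-i) = i+1 by omega]
  have c2 : ((n+1).choose i : ℚ)
      = (n+1).factorial / (i.factorial * (n+1-i).factorial) :=
    Nat.cast_choose ℚ (by omega)
  have c3 : ((n+1).choose (i+1) : ℚ)
      = (n+1).factorial / ((i+1).factorial * (n-i).factorial) := by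
    rw [Nat.cast_choose ℚ (show i+1 ≤ n+1 by omega), show n+1-(i+1) = n-i by omega]
  have expand : ((n+1).factorial : ℚ) = (n+1) * n.factorial := by
    exact_mod_cast Nat.factorial_succ n
  have hn1 : ((n:ℚ) + 1) ≠ 0 := by positivity
  rw [c1, c2, c3, expand]
  field_simp

lemma lemL1 (n : ℕ) (x y : ℚ) : gQ n x y = fQ n x y := by
  unfold gQ fQ
  have step : ∀ m ∈ range (n+1),
      (n.choose (2*m) : ℚ) * (catalan m : ℚ) * (x+y)^(n-2*m) * (x*y)^m
        = ∑ i ∈ range (n+1),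
            (n.factorial : ℚ) / (i.factorial * (n+1-i).factorial)
              * (i.choose m : ℚ) * ((n+1-i).choose (m+1) : ℚ) * x^(n-i) * y^i := by
    intro m hm
    simp only [mem_range] at hm
    exact lemE n m (by omega) x y
  rw [Finset.sum_congr rfl step, Finset.sum_comm]
  refine Finset.sum_congr rfl fun i hi => ?_
  simp only [mem_range] at hi
  have hi' : i ≤ n := by omega
  have collect : ∑ m ∈ range (n+1),
      (n.factorial : ℚ) / (i.factorial * (n+1-i).factorial)
        * (i.choose m : ℚ) * ((n+1-i).choose (m+1) : ℚ) * x^(n-i) * y^i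
      = ((n.factorial : ℚ) / (i.factorial * (n+1-i).factorial))
          * (∑ m ∈ range (n+1), (i.choose m : ℚ) * ((n+1-i).choose (m+1) : ℚ))
          * x^(n-i) * y^i := by
    rw [Finset.mul_sum, Finset.sum_mul, Finset.sum_mul]
    refine Finset.sum_congr rfl fun m _ => by ring
  rw [collect]
  have hv : (∑ m ∈ range (n+1), (i.choose m : ℚ) * ((n+1-i).choose (m+1) : ℚ))
      = ((n+1).choose (n-i) : ℚ) := by
    exact_mod_cast congrArg (Nat.cast : ℕ → ℚ) (vandC hi')
  rw [hv, lemD hi']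

/-- padding: `gQ k` can be written as a sum over any `range M` with `M ≥ k+1`. -/
lemma gQ_pad (k M : ℕ) (hM : k < M) (x y : ℚ) :
    gQ k x y = ∑ a ∈ range M, (k.choose (2*a) : ℚ) * (catalan a : ℚ) * (x+y)^(k-2*a) * (x*y)^a := by
  unfold gQ
  refine Finset.sum_subset ?_ ?_
  · intro a ha; simp only [mem_range] at *; omega
  · intro a ha ha'
    simp only [mem_range] at *
    rw [Nat.choose_eq_zero_of_lt (show k < 2*a by omega)]
    push_cast; ring

lemma group_cat (M : ℕ) (Φ : ℕ → ℚ) (hΦ : ∀ m, M ≤ m → Φ m = 0) :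
    ∑ a ∈ range M, ∑ b ∈ range M, (catalan a : ℚ) * (catalan b : ℚ) * Φ (a+b)
      = ∑ m ∈ range M, (catalan (m+1) : ℚ) * Φ m := by
  rw [← Finset.sum_product']
  have hres : ∑ p ∈ range M ×ˢ range M, (catalan p.1 : ℚ) * (catalan p.2 : ℚ) * Φ (p.1+p.2)
      = ∑ p ∈ (range M ×ˢ range M).filter (fun p => p.1 + p.2 < M),
          (catalan p.1 : ℚ) * (catalan p.2 : ℚ) * Φ (p.1+p.2) := by
    refine (Finset.sum_subset (Finset.filter_subset _ _) ?_).symm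
    intro p hp hp'
    simp only [Finset.mem_filter, Finset.mem_product, Finset.mem_range] at *
    rw [hΦ (p.1+p.2) (by omega)]
    ring
  rw [hres]
  have hrhs : ∑ m ∈ range M, (catalan (m+1) : ℚ) * Φ m
      = ∑ m ∈ range M, ∑ a ∈ range (m+1), (catalan a : ℚ) * (catalan (m-a) : ℚ) * Φ m := by
    refine Finset.sum_congr rfl fun m _ => ?_
    have hc : (catalan (m+1) : ℚ) = ∑ a ∈ range (m+1), (catalan a : ℚ) * (catalan (m-a) : ℚ) := by
      rw [catalan_succ']
      rw [Finset.Nat.sum_antidiagonal_eq_sum_range_succ (fun a b => catalan a * catalan b)]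
      push_cast
      rfl
    rw [hc, Finset.sum_mul]
  rw [hrhs, Finset.sum_sigma']
  refine (Finset.sum_nbij' (fun q => (q.2, q.1 - q.2)) (fun p => ⟨p.1 + p.2, p.1⟩) ?_ ?_ ?_ ?_ ?_).symm
  · intro q hq
    simp only [Finset.mem_sigma, Finset.mem_range, Finset.mem_filter, Finset.mem_product] at *
    omega
  · intro p hp
    simp only [Finset.mem_sigma, Finset.mem_range, Finset.mem_filter, Finset.mem_product] at *
    omega
  · intro q hq
    simp only [Finset.mem_sigma, Finset.mem_range] at hq
    ext <;> simp <;> omega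
  · intro p hp
    simp
  · intro q hq
    simp only [Finset.mem_sigma, Finset.mem_range] at hq
    have : q.2 + (q.1 - q.2) = q.1 := by omega
    simp only [this]

lemma lemL2 (n : ℕ) (x y : ℚ) :
    gQ (n+1) x y = (x+y) * gQ n x y
      + x*y * ∑ k ∈ range n, gQ k x y * gQ (n-1-k) x y := by
  -- Φ m
  set Φ : ℕ → ℚ := fun m =>
    (n.choose (2*m+1) : ℚ) * (x+y)^(n-1-2*m) * (x*y)^(m+1) with hΦ
  -- STEP 1: the convolution sum equals ∑_m catalan (m+1) * Φ m
  have conv : x*y * ∑ k ∈ range n, gQ k x y * gQ (n-1-k) x y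
      = ∑ m ∈ range (n+1), (catalan (m+1) : ℚ) * Φ m := by
    -- expand each gQ over range (n+1)
    have e1 : ∀ k ∈ range n, gQ k x y * gQ (n-1-k) x y
        = ∑ a ∈ range (n+1), ∑ b ∈ range (n+1),
            ((k.choose (2*a) : ℚ) * (catalan a : ℚ) * (x+y)^(k-2*a) * (x*y)^a)
            * ((n-1-k).choose (2*b) : ℚ) * (catalan b : ℚ) * (x+y)^(n-1-k-2*b) * (x*y)^b := by
      intro k hk
      simp only [mem_range] at hk
      rw [gQ_pad k (n+1) (by omega) x y, gQ_pad (n-1-k) (n+1) (by omega) x y,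
        Finset.sum_mul_sum]
      refine Finset.sum_congr rfl fun a _ => Finset.sum_congr rfl fun b _ => by ring
    rw [Finset.mul_sum, Finset.sum_congr rfl (fun k hk => by rw [e1 k hk])]
    -- per-(k,a,b) term normalization
    have e2 : ∀ k ∈ range n, ∀ a ∈ range (n+1), ∀ b ∈ range (n+1),
        x*y*(((k.choose (2*a) : ℚ) * (catalan a : ℚ) * (x+y)^(k-2*a) * (x*y)^a)
            * ((n-1-k).choose (2*b) : ℚ) * (catalan b : ℚ) * (x+y)^(n-1-k-2*b) * (x*y)^b)
          = (k.choose (2*a) : ℚ) * ((n-1-k).choose (2*b) : ℚ)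
              * ((catalan a : ℚ) * (catalan b : ℚ)
                * (x+y)^(n-1-2*(a+b)) * (x*y)^(a+b+1)) := by
      intro k hk a _ b _
      simp only [mem_range] at hk
      by_cases ha : 2*a ≤ k
      · by_cases hb : 2*b ≤ n-1-k
        · have hexp : (k-2*a) + (n-1-k-2*b) = n-1-2*(a+b) := by omega
          rw [← hexp, pow_add]
          have : (x*y)^a * (x*y)^b * (x*y) = (x*y)^(a+b+1) := by
            rw [← pow_add, ← pow_succ]
          rw [← this]
          ring
        · rw [Nat.choose_eq_zero_of_lt (show n-1-k < 2*b by omega)]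
          push_cast; ring
      · rw [Nat.choose_eq_zero_of_lt (show k < 2*a by omega)]
        push_cast; ring
    calc ∑ k ∈ range n, x*y*(∑ a ∈ range (n+1), ∑ b ∈ range (n+1),
            ((k.choose (2*a) : ℚ) * (catalan a : ℚ) * (x+y)^(k-2*a) * (x*y)^a)
            * ((n-1-k).choose (2*b) : ℚ) * (catalan b : ℚ) * (x+y)^(n-1-k-2*b) * (x*y)^b)
        = ∑ k ∈ range n, ∑ a ∈ range (n+1), ∑ b ∈ range (n+1),
            (k.choose (2*a) : ℚ) * ((n-1-k).choose (2*b) : ℚ)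
              * ((catalan a : ℚ) * (catalan b : ℚ)
                * (x+y)^(n-1-2*(a+b)) * (x*y)^(a+b+1)) := by
          refine Finset.sum_congr rfl fun k hk => ?_
          rw [Finset.mul_sum]
          refine Finset.sum_congr rfl fun a ha => ?_
          rw [Finset.mul_sum]
          exact Finset.sum_congr rfl fun b hb => e2 k hk a ha b hb
      _ = ∑ a ∈ range (n+1), ∑ b ∈ range (n+1), ∑ k ∈ range n,
            (k.choose (2*a) : ℚ) * ((n-1-k).choose (2*b) : ℚ)
              * ((catalan a : ℚ) * (catalan b : ℚ)
                * (x+y)^(n-1-2*(a+b)) * (x*y)^(a+b+1)) := by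
          rw [Finset.sum_comm]
          exact Finset.sum_congr rfl fun a _ => Finset.sum_comm
      _ = ∑ a ∈ range (n+1), ∑ b ∈ range (n+1),
            (catalan a : ℚ) * (catalan b : ℚ) * Φ (a+b) := by
          refine Finset.sum_congr rfl fun a _ => Finset.sum_congr rfl fun b _ => ?_
          rw [← Finset.sum_mul]
          have hV : ∑ k ∈ range n, (k.choose (2*a) : ℚ) * ((n-1-k).choose (2*b) : ℚ)
              = (n.choose (2*(a+b)+1) : ℚ) := by
            have := vand_upper (2*a) (2*b) n
            rw [show 2*a+2*b+1 = 2*(a+b)+1 by omega] at this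
            exact_mod_cast congrArg (Nat.cast : ℕ → ℚ) this
          rw [hV, hΦ]
          ring
      _ = ∑ m ∈ range (n+1), (catalan (m+1) : ℚ) * Φ m := by
          refine group_cat (n+1) Φ fun m hm => ?_
          simp only [hΦ]
          rw [Nat.choose_eq_zero_of_lt (show n < 2*m+1 by omega)]
          push_cast; ring
  rw [conv]
  have hA : (x+y) * gQ n x y
      = ∑ m ∈ range (n+2),
          (n.choose (2*m) : ℚ) * (catalan m : ℚ) * (x+y)^(n+1-2*m) * (x*y)^m := by
    unfold gQ
    symm
    rw [Finset.sum_range_succ,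
      show n.choose (2*(n+1)) = 0 from Nat.choose_eq_zero_of_lt (by omega), Finset.mul_sum]
    push_cast
    rw [zero_mul, zero_mul, zero_mul, add_zero]
    refine Finset.sum_congr rfl fun m hm => ?_
    by_cases h2 : 2*m ≤ n
    · rw [show n+1-2*m = (n-2*m)+1 by omega, pow_succ]
      ring
    · rw [Nat.choose_eq_zero_of_lt (show n < 2*m by omega)]
      push_cast; ring
  have hC : ∑ m ∈ range (n+2),
        (n.choose (2*m) : ℚ) * (catalan m : ℚ) * (x+y)^(n+1-2*m) * (x*y)^m
      = ∑ m ∈ range (n+1),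
          (n.choose (2*m+2) : ℚ) * (catalan (m+1) : ℚ)
            * (x+y)^(n+1-2*(m+1)) * (x*y)^(m+1)
        + (n.choose 0 : ℚ) * (catalan 0 : ℚ) * (x+y)^(n+1) * (x*y)^0 := by
    rw [Finset.sum_range_succ']
    congr 1
  have main : gQ (n+1) x y
      = (x+y) * gQ n x y + ∑ m ∈ range (n+1), (catalan (m+1) : ℚ) * Φ m := by
    rw [hA, hC]
    unfold gQ
    rw [Finset.sum_range_succ']
    have hsplit : ∀ m ∈ range (n+1),
        (((n+1).choose (2*(m+1)) : ℚ)) * (catalan (m+1) : ℚ)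
            * (x+y)^(n+1-2*(m+1)) * (x*y)^(m+1)
          = (n.choose (2*m+2) : ℚ) * (catalan (m+1) : ℚ)
              * (x+y)^(n+1-2*(m+1)) * (x*y)^(m+1)
            + (catalan (m+1) : ℚ) * Φ m := by
      intro m _
      have hcs : (n+1).choose (2*(m+1)) = n.choose (2*m+1) + n.choose (2*m+2) := by
        rw [show 2*(m+1) = (2*m+1)+1 by ring]
        exact Nat.choose_succ_succ _ _
      rw [hcs, hΦ]
      push_cast
      rw [show n+1-2*(m+1) = n-1-2*m by omega]
      ring
    rw [Finset.sum_congr rfl hsplit, Finset.sum_add_distrib]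
    simp only [Nat.mul_zero, Nat.choose_zero_right, catalan_zero, Nat.cast_one, pow_zero,
      Nat.sub_zero]
    push_cast
    ring
  rw [main]


lemma eval_narayanaH (n : ℕ) (v : Fin 2 → ℚ) :
    MvPolynomial.eval v (narayanaH n) = fQ n (v 0) (v 1) := by
  unfold narayanaH fQ
  simp [MvPolynomial.eval_sum]

theorem narayanaH_recurrence (n : ℕ) (hn : 1 ≤ n) :
    narayanaH n =
      (MvPolynomial.X 0 + MvPolynomial.X 1) * narayanaH (n - 1) +
        MvPolynomial.X 0 * MvPolynomial.X 1 *
          ∑ i ∈ Finset.Icc 1 (n - 1), narayanaH (i - 1) * narayanaH (n - i - 1) := by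
  obtain ⟨N, rfl⟩ : ∃ N, n = N + 1 := ⟨n - 1, by omega⟩
  apply MvPolynomial.funext
  intro v
  simp only [map_add, map_mul, MvPolynomial.eval_sum, MvPolynomial.eval_X, eval_narayanaH]
  set x := v 0
  set y := v 1
  rw [show N + 1 - 1 = N from rfl]
  have hIcc : ∑ i ∈ Finset.Icc 1 N, fQ (i-1) x y * fQ (N+1-i-1) x y
      = ∑ k ∈ range N, fQ k x y * fQ (N-1-k) x y := by
    rw [show Finset.Icc 1 N = Finset.Ico 1 (N+1) from rfl, Finset.sum_Ico_eq_sum_range]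
    refine Finset.sum_congr (by norm_num) fun k hk => ?_
    simp only [mem_range] at hk
    rw [show 1+k-1 = k by omega, show N+1-(1+k)-1 = N-1-k by omega]
  rw [hIcc]
  simp only [← lemL1]
  exact lemL2 N x y
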